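/- Let q be an even prime power. Then for every integer 0 ≤ j < q-1 and every b ∈ C_{2j+1}^{(q-1,q^2)}, the complete weight of the codeword c_{q-1}(b) satisfies w_cplt(c_{q-1}(b)) = σ^j(W). -/

import Mathlib

open Polynomial

/-- The cyclotomic class `C_i^{(N,q²)} = γ^i⟨γ^N⟩`, viewed as a subset of `E`. -/
def cycClass {E : Type} [Field E] (γ : Eˣ) (i N : ℕ) : Set E :=
  {x : E | ∃ z : Eˣ, z ∈ Subgroup.zpowers (γ ^ N) ∧ x = ((γ : E) ^ i) * (z : E)}

/-- The codeword `c_N(a) = (Tr(a γ^(N k)))_{k=0}^{n-1}`, a vector of length `n` over `F`. -/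
noncomputable def cwordN {F E : Type} [Field F] [Field E] [Algebra F E]
    (γ : Eˣ) (N n : ℕ) (a : E) : Fin n → F :=
  fun k => Algebra.trace F E (a * (γ : E) ^ (N * (k : ℕ)))

/-- `𝒩(t, v)`: the number of occurrences of the symbol `t` in the vector `v`. -/
def Ncount {F : Type} [DecidableEq F] {n : ℕ} (t : F) (v : Fin n → F) : ℕ :=
  (Finset.univ.filter fun k => v k = t).card

/-- For `q` even: `R = {0 ≤ i < q-1 : α^i = α^(k+1) + α^(q-1-k) for some 0 ≤ k < q/2 - 1}`. -/
def Rset (q : ℕ) {F : Type} [Field F] (α : F) : Set ℕ :=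
  {i | i < q - 1 ∧ ∃ k : ℕ, k < q / 2 - 1 ∧ α ^ i = α ^ (k + 1) + α ^ (q - 1 - k)}

/-- For `q` even: `I = {0,1,...,q-2} \ R`. -/
def Iset (q : ℕ) {F : Type} [Field F] (α : F) : Set ℕ :=
  {i | i < q - 1} \ Rset q α

open scoped Classical in
/-- The vector `W` of length `q-1`: the `i`-th entry is `2` if `i ∈ I` and `0` otherwise. -/
noncomputable def Wvec (q : ℕ) {F : Type} [Field F] (α : F) : ℕ → ℕ :=
  fun i => if i ∈ Iset q α then 2 else 0

/-- One circular right shift of a vector of length `m` (indexed by naturals `< m`). -/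
def rshift (m : ℕ) (V : ℕ → ℕ) : ℕ → ℕ := fun i => V ((i + m - 1) % m)

/- ### Auxiliary lemmas -/

lemma aux_card_eval_zero_le {E : Type} [Field E] [Fintype E] [DecidableEq E]
    (p : Polynomial E) (hp : p ≠ 0) :
    (Finset.univ.filter fun x => p.eval x = 0).card ≤ p.natDegree := by
  have hsub : (Finset.univ.filter fun x => p.eval x = 0) ⊆ p.roots.toFinset := by
    intro x hx
    rw [Finset.mem_filter] at hx
    rw [Multiset.mem_toFinset, Polynomial.mem_roots hp]
    exact hx.2
  exact le_trans (Finset.card_le_card hsub)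
    (le_trans (Multiset.toFinset_card_le _) (Polynomial.card_roots' p))

lemma aux_rshift_iterate (m : ℕ) :
    ∀ (j : ℕ) (V : ℕ → ℕ) (i : ℕ), i < m →
      (rshift m)^[j] V i = V ((i + j * (m - 1)) % m) := by
  intro j
  induction j with
  | zero => intro V i hi; simp [Nat.mod_eq_of_lt hi]
  | succ j ih =>
    intro V i hi
    have hm : 0 < m := lt_of_le_of_lt (Nat.zero_le i) hi
    rw [Function.iterate_succ_apply, ih (rshift m V) i hi]
    show V (((i + j * (m - 1)) % m + m - 1) % m) = _
    have h1 : (i + j * (m - 1)) % m + m - 1 = (i + j * (m - 1)) % m + (m - 1) := by omega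
    rw [h1, Nat.mod_add_mod]
    congr 1
    have h2 : (j + 1) * (m - 1) = j * (m - 1) + (m - 1) := by rw [Nat.succ_mul]
    rw [h2, ← Nat.add_assoc]

lemma aux_quad {K : Type} [Field K] (h2 : ∀ a : K, a + a = 0)
    (x y1 y2 s n : K) (hs : y1 + y2 = s) (hn : y1 * y2 = n)
    (hx : x ^ 2 + s * x + n = 0) : x = y1 ∨ x = y2 := by
  have hfac : (x + y1) * (x + y2) = 0 := by linear_combination hx + x * hs + hn
  rcases mul_eq_zero.mp hfac with h | h
  · left
    rw [eq_neg_of_add_eq_zero_left h, neg_eq_of_add_eq_zero_left (h2 y1)]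
  · right
    rw [eq_neg_of_add_eq_zero_left h, neg_eq_of_add_eq_zero_left (h2 y2)]

lemma aux_mod_inj {m c i1 i2 : ℕ} (h1 : i1 < m) (h2 : i2 < m)
    (h : (i1 + c) % m = (i2 + c) % m) : i1 = i2 := by
  have := Nat.ModEq.add_right_cancel' c (h : (i1 + c) ≡ (i2 + c) [MOD m])
  rwa [Nat.ModEq, Nat.mod_eq_of_lt h1, Nat.mod_eq_of_lt h2] at this

lemma aux_mod_shift {m : ℕ} (c : ℕ) {r : ℕ} (hm : 0 < m) (hr : r < m) :
    ((r + (m - c % m)) % m + c) % m = r := by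
  have hc : c % m < m := Nat.mod_lt _ hm
  have h1 : ((r + (m - c % m)) % m + c) ≡ (r + (m - c % m)) + c [MOD m] :=
    (Nat.mod_modEq _ m).add_right c
  have h2 : (r + (m - c % m)) + c ≡ r + (m - c % m) + c % m [MOD m] :=
    Nat.ModEq.add_left _ (Nat.mod_modEq c m).symm
  have h3 : r + (m - c % m) + c % m = r + m := by omega
  have := (h1.trans h2).trans (by rw [h3] : r + (m - c % m) + c % m ≡ r + m [MOD m])
  rwa [Nat.ModEq, Nat.add_mod_right, Nat.mod_eq_of_lt hr] at this

set_option maxHeartbeats 2000000 in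
theorem stmt_11 (q : ℕ) (F E : Type) [Field F] [Fintype F] [DecidableEq F]
    [Field E] [Fintype E] [Algebra F E]
    (hF : Fintype.card F = q) (hE : Fintype.card E = q ^ 2) (hq : Even q)
    (γ : Eˣ) (hγ : ∀ x : Eˣ, x ∈ Subgroup.zpowers γ)
    (α : F) (hα : algebraMap F E α = (γ : E) ^ (q + 1))
    (j : ℕ) (hj : j < q - 1) (b : E) (hb : b ∈ cycClass γ (2 * j + 1) (q - 1)) :
    ∀ i : ℕ, i < q - 1 →
      Ncount (α ^ i) (cwordN γ (q - 1) (q + 1) b) = (rshift (q - 1))^[j] (Wvec q α) i := by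
  classical
  intro i hi
  obtain ⟨rq, hrq⟩ := hq
  have hq2 : 2 ≤ q := by rw [← hF]; exact Fintype.one_lt_card
  have hm : 0 < q - 1 := by omega
  -- characteristic 2
  haveI hcF : CharP F (ringChar F) := ringChar.charP F
  obtain ⟨nn, hpp, hqpow⟩ := FiniteField.card F (ringChar F)
  rw [hF] at hqpow
  have hp2 : ringChar F = 2 := by
    have h2 : (2 : ℕ) ∣ q := ⟨rq, by omega⟩
    have h2p : (2 : ℕ) ∣ ringChar F :=
      (Nat.Prime.dvd_of_dvd_pow Nat.prime_two (hqpow ▸ h2))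
    exact ((Nat.prime_dvd_prime_iff_eq Nat.prime_two hpp).mp h2p).symm
  haveI hcF2 : CharP F 2 := hp2 ▸ hcF
  haveI hcE2 : CharP E 2 := charP_of_injective_algebraMap (algebraMap F E).injective 2
  have h2F : ∀ a : F, a + a = 0 := CharTwo.add_self_eq_zero
  have h2E : ∀ a : E, a + a = 0 := CharTwo.add_self_eq_zero
  have hq0 : q ≠ 0 := by omega
  have hqpow2 : q = 2 ^ (nn : ℕ) := by rw [hqpow, hp2]
  haveI : Fact (Nat.Prime 2) := ⟨Nat.prime_two⟩
  have hfrob_add : ∀ x y : E, (x + y) ^ q = x ^ q + y ^ q := by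
    intro x y; rw [hqpow2]; exact add_pow_char_pow (p := 2) (n := (nn : ℕ)) x y
  have halg : Function.Injective (algebraMap F E) := (algebraMap F E).injective
  have hfix : ∀ c : F, (algebraMap F E c) ^ q = algebraMap F E c := by
    intro c; rw [← map_pow]; congr 1; rw [← hF]; exact FiniteField.pow_card c
  -- finrank
  have hfr : Module.finrank F E = 2 := by
    have h := Module.card_eq_pow_finrank (K := F) (V := E)
    rw [hF, hE] at h
    exact (Nat.pow_right_injective hq2 h.symm)
  -- orders
  have hcardEu : Nat.card Eˣ = q ^ 2 - 1 := by
    rw [Nat.card_eq_fintype_card, Fintype.card_units, hE]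
  have hordγ : orderOf γ = q ^ 2 - 1 := by
    rw [orderOf_eq_card_of_forall_mem_zpowers hγ, hcardEu]
  have hq21 : q ^ 2 - 1 = (q - 1) * (q + 1) := by
    zify [show 1 ≤ q ^ 2 by nlinarith, show 1 ≤ q by omega]; ring
  have hq12 : q ^ 2 - 1 = (q + 1) * (q - 1) := by rw [hq21, Nat.mul_comm]
  have hordg : orderOf (γ ^ (q - 1)) = q + 1 := by
    rw [orderOf_pow, hordγ, Nat.gcd_eq_right ⟨q + 1, hq21⟩, hq21,
      Nat.mul_div_cancel_left _ hm]
  have hordA : orderOf (γ ^ (q + 1)) = q - 1 := by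
    rw [orderOf_pow, hordγ, Nat.gcd_eq_right ⟨q - 1, hq12⟩, hq12,
      Nat.mul_div_cancel_left _ (by omega : 0 < q + 1)]
  -- α facts
  have hα0 : α ≠ 0 := by
    intro h
    have hz : ((γ ^ (q + 1) : Eˣ) : E) = 0 := by
      rw [Units.val_pow_eq_pow_val, ← hα, h, map_zero]
    exact Units.ne_zero _ hz
  set αu : Fˣ := Units.mk0 α hα0 with hαu
  have hordαu : orderOf αu = q - 1 := by
    have h1 : Units.map (algebraMap F E : F →* E) αu = γ ^ (q + 1) := by
      apply Units.ext
      simp [hαu, hα]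
    have h2 := orderOf_injective (Units.map (algebraMap F E : F →* E))
      (Units.map_injective halg) αu
    rw [h1, hordA] at h2
    exact h2.symm
  have hval : ∀ n : ℕ, ((αu ^ n : Fˣ) : F) = α ^ n := by
    intro n; rw [Units.val_pow_eq_pow_val]; rfl
  have hpowinj : ∀ a b2 : ℕ, a < q - 1 → b2 < q - 1 → α ^ a = α ^ b2 → a = b2 := by
    intro a b2 ha hb2 h
    have hu : αu ^ a = αu ^ b2 := Units.ext (by rw [hval, hval]; exact h)
    have := pow_eq_pow_iff_modEq.mp hu
    rwa [hordαu, Nat.ModEq, Nat.mod_eq_of_lt ha, Nat.mod_eq_of_lt hb2] at this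
  have hpowmod : ∀ a b2 : ℕ, a % (q - 1) = b2 % (q - 1) → α ^ a = α ^ b2 := by
    intro a b2 h
    have hu : αu ^ a = αu ^ b2 := pow_eq_pow_iff_modEq.mpr (by rw [hordαu]; exact h)
    rw [← hval, ← hval, hu]
  have hsurjα : ∀ c : F, c ≠ 0 → ∃ i0, i0 < q - 1 ∧ α ^ i0 = c := by
    intro c hc
    have hcardFu : Fintype.card Fˣ = q - 1 := by rw [Fintype.card_units, hF]
    have hinj : Set.InjOn (fun k : ℕ => αu ^ k) ↑(Finset.range (q - 1)) := by
      intro k1 hk1 k2 hk2 h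
      exact pow_injOn_Iio_orderOf (x := αu)
        (by rw [hordαu]; simpa using hk1) (by rw [hordαu]; simpa using hk2) h
    have hcard : ((Finset.range (q - 1)).image (fun k => αu ^ k)).card = q - 1 := by
      rw [Finset.card_image_of_injOn hinj, Finset.card_range]
    have huniv : (Finset.range (q - 1)).image (fun k => αu ^ k) = Finset.univ :=
      Finset.eq_univ_of_card _ (by rw [hcard, hcardFu])
    have hmem : Units.mk0 c hc ∈ (Finset.range (q - 1)).image (fun k => αu ^ k) := by
      rw [huniv]; exact Finset.mem_univ _
    obtain ⟨k, hk, hke⟩ := Finset.mem_image.mp hmem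
    refine ⟨k, Finset.mem_range.mp hk, ?_⟩
    have := congrArg Units.val hke
    simpa [hαu] using this
  -- Frobenius and the trace formula
  haveI : FiniteDimensional F E := Module.Finite.of_finite
  have hfrinj : Function.Injective (fun x : E => x ^ q) := by
    intro x y h
    have h0 : (x + y) ^ q = 0 := by
      rw [hfrob_add]; simp only at h; rw [h]; exact h2E _
    have h1 : x + y = 0 := pow_eq_zero_iff hq0 |>.mp h0
    rw [eq_neg_of_add_eq_zero_left h1, neg_eq_of_add_eq_zero_left (h2E y)]
  let frA : E →ₐ[F] E :=
    { toFun := fun x => x ^ q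
      map_one' := one_pow q
      map_mul' := fun x y => mul_pow x y q
      map_zero' := zero_pow hq0
      map_add' := hfrob_add
      commutes' := hfix }
  let frE : E ≃ₐ[F] E := AlgEquiv.ofBijective frA (Finite.injective_iff_bijective.mp hfrinj)
  have hfrE : ∀ x : E, frE x = x ^ q := fun x => rfl
  have hγq : (γ : E) ^ q ≠ (γ : E) := by
    intro h
    have hu : γ ^ q = γ ^ 1 := Units.ext (by rw [Units.val_pow_eq_pow_val, h]; simp)
    have hmod := pow_eq_pow_iff_modEq.mp hu
    rw [hordγ, Nat.ModEq] at hmod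
    have hlt : q < q ^ 2 - 1 := by nlinarith
    rw [Nat.mod_eq_of_lt hlt, Nat.mod_eq_of_lt (by omega)] at hmod
    omega
  have hfrne : frE ≠ AlgEquiv.refl := by
    intro h
    exact hγq (by rw [← hfrE (γ : E), h]; rfl)
  have hTr : ∀ x : E, algebraMap F E (Algebra.trace F E x) = x + x ^ q := by
    intro x
    rw [trace_eq_sum_automorphisms]
    have hcard2 : Fintype.card (E ≃ₐ[F] E) = 2 := by
      rw [← Nat.card_eq_fintype_card, IsGalois.card_aut_eq_finrank, hfr]
    have hne' : AlgEquiv.refl ∉ ({frE} : Finset (E ≃ₐ[F] E)) := by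
      simp [Ne.symm hfrne]
    have huniv : (Finset.univ : Finset (E ≃ₐ[F] E)) = {AlgEquiv.refl, frE} := by
      symm
      apply Finset.eq_univ_of_card
      rw [Finset.card_insert_of_notMem hne', Finset.card_singleton, hcard2]
    rw [huniv, Finset.sum_insert hne', Finset.sum_singleton, hfrE]
    rfl
  -- decomposition of b
  obtain ⟨z, hz, hbz⟩ := hb
  obtain ⟨m0, hm0⟩ := (mem_powers_iff_mem_zpowers.mpr hz)
  set BU : Eˣ := γ ^ (2 * j + 1) * (γ ^ (q - 1)) ^ m0 with hBU
  have hBb : (BU : E) = b := by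
    rw [hbz, ← hm0, hBU]
    push_cast
    ring
  have hb0 : b ≠ 0 := by rw [← hBb]; exact Units.ne_zero BU
  have hg1E : ((γ : E) ^ (q - 1)) ^ (q + 1) = 1 := by
    have h := pow_orderOf_eq_one (γ ^ (q - 1))
    rw [hordg] at h
    have := congrArg Units.val h
    push_cast at this
    exact this
  have hbq : b ^ (q + 1) = algebraMap F E (α ^ (2 * j + 1)) := by
    rw [← hBb, hBU, map_pow, hα]
    push_cast
    rw [mul_pow]
    have h1 : (((γ : E) ^ (q - 1)) ^ m0) ^ (q + 1)
        = (((γ : E) ^ (q - 1)) ^ (q + 1)) ^ m0 := pow_right_comm _ _ _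
    rw [h1, hg1E, one_pow, mul_one, pow_right_comm]
  -- the codeword entries
  set g : E := (γ : E) ^ (q - 1) with hgdef
  set xk : ℕ → E := fun k => b * g ^ k with hxk
  have hentry : ∀ k : Fin (q + 1),
      cwordN γ (q - 1) (q + 1) b k = Algebra.trace F E (xk k) := by
    intro k
    simp only [cwordN, hxk, hgdef, pow_mul]
  have hxE : ∀ k : Fin (q + 1),
      algebraMap F E (cwordN γ (q - 1) (q + 1) b k) = xk k + (xk k) ^ q := by
    intro k; rw [hentry k, hTr]
  have hxknorm : ∀ k : ℕ, (xk k) ^ (q + 1) = algebraMap F E (α ^ (2 * j + 1)) := by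
    intro k
    simp only [hxk]
    rw [mul_pow, hgdef]
    have h1 : (((γ : E) ^ (q - 1)) ^ k) ^ (q + 1)
        = (((γ : E) ^ (q - 1)) ^ (q + 1)) ^ k := pow_right_comm _ _ _
    rw [h1, hg1E, one_pow, mul_one, hbq]
  have hxinj : ∀ k1 k2 : Fin (q + 1), xk k1 = xk k2 → k1 = k2 := by
    intro k1 k2 h
    simp only [hxk] at h
    have h2 : g ^ (k1 : ℕ) = g ^ (k2 : ℕ) := mul_left_cancel₀ hb0 h
    have h3 : (γ ^ (q - 1)) ^ (k1 : ℕ) = (γ ^ (q - 1)) ^ (k2 : ℕ) := by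
      apply Units.ext
      push_cast
      rw [hgdef] at h2
      exact h2
    have := pow_injOn_Iio_orderOf (x := γ ^ (q - 1))
      (by rw [hordg]; exact k1.2) (by rw [hordg]; exact k2.2) h3
    exact Fin.ext this
  -- the quadratic satisfied by each entry
  have hquad : ∀ (k : Fin (q + 1)) (t : F), cwordN γ (q - 1) (q + 1) b k = t →
      (xk k) ^ 2 + (algebraMap F E t) * (xk k) + algebraMap F E (α ^ (2 * j + 1)) = 0 := by
    intro k t ht
    have h1 : algebraMap F E t = xk k + (xk k) ^ q := by rw [← ht, hxE]
    have h2 : (xk k) ^ (q + 1) = algebraMap F E (α ^ (2 * j + 1)) := hxknorm k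
    have h3 : (xk k) ^ (q + 1) = (xk k) ^ q * (xk k) := pow_succ _ _
    linear_combination (xk k) * h1 - h2 + h3 + h2E ((xk k) ^ 2) + h2E ((xk k) ^ q * xk k)
  -- every fiber has at most 2 elements
  have hfib2 : ∀ t : F,
      (Finset.univ.filter fun k : Fin (q + 1) => cwordN γ (q - 1) (q + 1) b k = t).card ≤ 2 := by
    intro t
    set P : Polynomial E :=
      X ^ 2 + C (algebraMap F E t) * X + C (algebraMap F E (α ^ (2 * j + 1))) with hP
    have hPd : P.natDegree = 2 := by
      rw [hP]; compute_degree!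
    have hP0 : P ≠ 0 := by
      intro h; rw [h] at hPd; simp at hPd
    refine le_trans (Finset.card_le_card_of_injOn (fun k => xk (k : ℕ)) ?_ ?_)
      (le_trans (aux_card_eval_zero_le P hP0) (le_of_eq hPd))
    · intro k hk
      rw [Finset.mem_coe, Finset.mem_filter] at hk
      rw [Finset.mem_coe, Finset.mem_filter]
      refine ⟨Finset.mem_univ _, ?_⟩
      have := hquad k t hk.2
      rw [hP]
      simp only [Polynomial.eval_add, Polynomial.eval_mul, Polynomial.eval_pow,
        Polynomial.eval_X, Polynomial.eval_C]
      linear_combination this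
    · intro k1 hk1 k2 hk2 h
      exact hxinj k1 k2 h
  -- the zero fiber has exactly one element
  have hfib0 :
      (Finset.univ.filter fun k : Fin (q + 1) => cwordN γ (q - 1) (q + 1) b k = (0:F)).card = 1 := by
    set hU : Eˣ := (γ ^ (q - 1)) ^ (q - 1) with hhU
    have hordhU : orderOf hU = q + 1 := by
      rw [hhU, orderOf_pow, hordg]
      have hgcd : Nat.gcd (q + 1) (q - 1) = 1 := by
        have hdd := Nat.dvd_sub (Nat.gcd_dvd_left (q + 1) (q - 1))
          (Nat.gcd_dvd_right (q + 1) (q - 1))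
        rw [show q + 1 - (q - 1) = 2 by omega] at hdd
        have hodd : ¬ (2 ∣ (q + 1)) := by omega
        rcases (Nat.dvd_prime Nat.prime_two).mp hdd with h | h
        · exact h
        · exact absurd (h ▸ Nat.gcd_dvd_left (q + 1) (q - 1)) hodd
      rw [hgcd, Nat.div_one]
    set d : Eˣ := (BU ^ (q - 1))⁻¹ with hd
    have hdq : d ^ (q + 1) = 1 := by
      have hcard := pow_card_eq_one (x := BU)
      rw [Fintype.card_units, hE] at hcard
      have hb1 : BU ^ ((q - 1) * (q + 1)) = 1 := by rw [← hq21]; exact hcard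
      rw [hd, inv_pow, ← pow_mul, hb1, inv_one]
    have hcond : ∀ k : Fin (q + 1), cwordN γ (q - 1) (q + 1) b k = (0:F) ↔ hU ^ (k : ℕ) = d := by
      intro k
      have hxEk := hxE k
      have e1 : cwordN γ (q - 1) (q + 1) b k = (0:F) ↔ xk (k:ℕ) + (xk (k:ℕ)) ^ q = 0 := by
        constructor
        · intro h; rw [h, map_zero] at hxEk; exact hxEk.symm
        · intro h; exact halg (by rw [hxEk, h, map_zero])
      have e2 : xk (k:ℕ) + (xk (k:ℕ)) ^ q = 0 ↔ (xk (k:ℕ)) ^ q = xk (k:ℕ) := by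
        constructor
        · intro h
          have h3 := eq_neg_of_add_eq_zero_right h
          rwa [CharTwo.neg_eq] at h3
        · intro h; rw [h]; exact h2E _
      have hxku : xk (k:ℕ) = ((BU * (γ ^ (q - 1)) ^ (k:ℕ) : Eˣ) : E) := by
        simp only [hxk, hgdef]
        rw [Units.val_mul, Units.val_pow_eq_pow_val, Units.val_pow_eq_pow_val, hBb]
      have e3 : (xk (k:ℕ)) ^ q = xk (k:ℕ) ↔
          (BU * (γ ^ (q-1)) ^ (k:ℕ)) ^ q = BU * (γ ^ (q-1)) ^ (k:ℕ) := by
        rw [hxku]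
        constructor
        · intro h; exact Units.ext (by push_cast; exact h)
        · intro h
          have := congrArg Units.val h
          push_cast at this
          push_cast
          exact this
      set XU : Eˣ := BU * (γ ^ (q - 1)) ^ (k : ℕ) with hXU
      have e4 : XU ^ q = XU ↔ XU ^ (q - 1) = 1 := by
        constructor
        · intro h
          have h5 : XU ^ (q - 1) * XU = 1 * XU := by
            rw [one_mul, ← pow_succ, show q - 1 + 1 = q by omega, h]
          exact mul_right_cancel h5
        · intro h
          calc XU ^ q = XU ^ (q - 1 + 1) := by rw [show q - 1 + 1 = q by omega]
            _ = XU ^ (q - 1) * XU := pow_succ _ _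
            _ = XU := by rw [h, one_mul]
      have e5 : XU ^ (q - 1) = 1 ↔ hU ^ (k : ℕ) = d := by
        have hXpow : XU ^ (q - 1) = BU ^ (q - 1) * hU ^ (k : ℕ) := by
          rw [hXU, mul_pow, hhU]
          congr 1
          exact pow_right_comm _ _ _
        rw [hXpow, hd]
        constructor
        · intro h
          exact (inv_eq_of_mul_eq_one_right h).symm
        · intro h
          rw [h]
          simp
      exact e1.trans (e2.trans (e3.trans (e4.trans e5)))
    have hg1u : hU ^ (q + 1) = 1 := by rw [← hordhU]; exact pow_orderOf_eq_one hU
    have hker : ∃ k0 : Fin (q + 1), hU ^ (k0 : ℕ) = d := by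
      have hinj2 : Set.InjOn (fun k : Fin (q + 1) => hU ^ (k : ℕ))
          ↑(Finset.univ : Finset (Fin (q+1))) := by
        intro k1 _ k2 _ h
        exact Fin.ext (pow_injOn_Iio_orderOf
          (by rw [hordhU]; exact k1.2) (by rw [hordhU]; exact k2.2) h)
      have hTcard : ((Finset.univ : Finset (Fin (q+1))).image (fun k : Fin (q+1) => hU ^ (k:ℕ))).card
          = q + 1 := by
        have h := Finset.card_image_of_injOn hinj2
        rw [Finset.card_univ, Fintype.card_fin] at h
        exact h
      have hsubT : ((Finset.univ : Finset (Fin (q+1))).image (fun k : Fin (q+1) => hU ^ (k:ℕ)))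
          ⊆ Finset.univ.filter (fun u : Eˣ => u ^ (q + 1) = 1) := by
        intro u hu
        obtain ⟨k, _, rfl⟩ := Finset.mem_image.mp hu
        rw [Finset.mem_filter]
        exact ⟨Finset.mem_univ _, by rw [← pow_mul, Nat.mul_comm, pow_mul, hg1u, one_pow]⟩
      have hScard : (Finset.univ.filter (fun u : Eˣ => u ^ (q + 1) = 1)).card ≤ q + 1 := by
        have hP0 : ((X : Polynomial E) ^ (q + 1) - C 1) ≠ 0 := X_pow_sub_C_ne_zero (by omega) 1
        refine le_trans (Finset.card_le_card_of_injOn (fun u : Eˣ => (u : E)) ?_ ?_)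
          (le_trans (aux_card_eval_zero_le _ hP0) (le_of_eq natDegree_X_pow_sub_C))
        · intro u hu
          rw [Finset.mem_coe, Finset.mem_filter] at hu ⊢
          refine ⟨Finset.mem_univ _, ?_⟩
          have h2 : (u : E) ^ (q + 1) = 1 := by
            have h3 := congrArg Units.val hu.2
            push_cast at h3
            exact h3
          simp only [Polynomial.eval_sub, Polynomial.eval_pow, Polynomial.eval_X,
            Polynomial.eval_C, h2, sub_self]
        · intro u _ v _ h
          exact Units.ext h
      have hTS := Finset.eq_of_subset_of_card_le hsubT (by rw [hTcard]; exact hScard)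
      have hdT : d ∈ (Finset.univ : Finset (Fin (q+1))).image (fun k : Fin (q+1) => hU ^ (k:ℕ)) := by
        rw [hTS, Finset.mem_filter]
        exact ⟨Finset.mem_univ _, hdq⟩
      obtain ⟨k0, _, hk0⟩ := Finset.mem_image.mp hdT
      exact ⟨k0, hk0⟩
    obtain ⟨k0, hk0⟩ := hker
    rw [Finset.card_eq_one]
    refine ⟨k0, ?_⟩
    ext k
    rw [Finset.mem_filter, Finset.mem_singleton]
    constructor
    · rintro ⟨-, hk⟩
      have h1 := (hcond k).mp hk
      exact Fin.ext (pow_injOn_Iio_orderOf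
        (by rw [hordhU]; exact k.2) (by rw [hordhU]; exact k0.2) (h1.trans hk0.symm))
    · rintro rfl
      exact ⟨Finset.mem_univ _, (hcond k).mpr hk0⟩
  -- N
  set N : ℕ → ℕ := fun i0 => Ncount (α ^ i0) (cwordN γ (q - 1) (q + 1) b) with hN
  have hNdef : ∀ i0 : ℕ, N i0 =
      (Finset.univ.filter fun k : Fin (q + 1) => cwordN γ (q - 1) (q + 1) b k = α ^ i0).card := by
    intro i0
    simp only [hN, Ncount]
  have hsum : ∑ i0 ∈ Finset.range (q - 1), N i0 = q := by
    have hU2 : (Finset.univ.filter fun k : Fin (q + 1) => ¬ cwordN γ (q - 1) (q + 1) b k = (0:F))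
        = (Finset.range (q - 1)).biUnion
          (fun i0 => Finset.univ.filter fun k : Fin (q + 1) =>
            cwordN γ (q - 1) (q + 1) b k = α ^ i0) := by
      ext k
      simp only [Finset.mem_filter, Finset.mem_biUnion, Finset.mem_range, Finset.mem_univ,
        true_and]
      constructor
      · intro h
        obtain ⟨i0, hi0, he⟩ := hsurjα _ h
        exact ⟨i0, hi0, he.symm⟩
      · rintro ⟨i0, hi0, he⟩
        rw [he]
        exact pow_ne_zero _ hα0
    have hdisj : ∀ i1 ∈ Finset.range (q-1), ∀ i2 ∈ Finset.range (q-1), i1 ≠ i2 →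
        Disjoint
          (Finset.univ.filter fun k : Fin (q + 1) => cwordN γ (q - 1) (q + 1) b k = α ^ i1)
          (Finset.univ.filter fun k : Fin (q + 1) => cwordN γ (q - 1) (q + 1) b k = α ^ i2) := by
      intro i1 h1 i2 h2 hne
      rw [Finset.disjoint_left]
      intro k hk1 hk2
      rw [Finset.mem_filter] at hk1 hk2
      exact hne (hpowinj i1 i2 (Finset.mem_range.mp h1) (Finset.mem_range.mp h2)
        (hk1.2.symm.trans hk2.2))
    have hcb := Finset.card_biUnion hdisj
    have htot := Finset.card_filter_add_card_filter_not
      (s := (Finset.univ : Finset (Fin (q+1))))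
      (p := fun k => cwordN γ (q - 1) (q + 1) b k = (0:F))
    rw [Finset.card_univ, Fintype.card_fin] at htot
    have hEqN : ∑ i0 ∈ Finset.range (q-1), N i0
        = (Finset.univ.filter fun k : Fin (q + 1) =>
            ¬ cwordN γ (q - 1) (q + 1) b k = (0:F)).card := by
      rw [hU2, hcb]
      exact Finset.sum_congr rfl (fun i0 _ => hNdef i0)
    rw [hEqN]
    omega
  -- the set R has q/2 - 1 elements
  have hRfin : ((Finset.range (q - 1)).filter (fun i0 => i0 ∈ Rset q α)).card = q / 2 - 1 := by
    have hvne : ∀ k, k < q / 2 - 1 → α ^ (k + 1) + α ^ (q - 1 - k) ≠ 0 := by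
      intro k hk h0
      have heqv : α ^ (k + 1) = α ^ (q - 1 - k) := by
        have h1 := eq_neg_of_add_eq_zero_left h0
        rwa [CharTwo.neg_eq] at h1
      have hu : αu ^ (k+1) = αu ^ (q-1-k) := Units.ext (by rw [hval, hval]; exact heqv)
      have hmod := pow_eq_pow_iff_modEq.mp hu
      rw [hordαu, Nat.ModEq] at hmod
      rcases Nat.eq_zero_or_pos k with rfl | hkpos
      · rw [Nat.sub_zero, Nat.mod_self, Nat.mod_eq_of_lt (by omega)] at hmod; omega
      · rw [Nat.mod_eq_of_lt (by omega), Nat.mod_eq_of_lt (by omega)] at hmod; omega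
    have hvinj : ∀ k1 k2, k1 < q/2-1 → k2 < q/2-1 →
        α ^ (k1+1) + α ^ (q-1-k1) = α ^ (k2+1) + α ^ (q-1-k2) → k1 = k2 := by
      intro k1 k2 h1 h2 hv12
      have hprod1 : α ^ (k1+1) * α ^ (q-1-k1) = α ^ q := by
        rw [← pow_add, show k1+1+(q-1-k1) = q by omega]
      have hprod2 : α ^ (k2+1) * α ^ (q-1-k2) = α ^ q := by
        rw [← pow_add, show k2+1+(q-1-k2) = q by omega]
      have hroot : (α ^ (k1+1)) ^ 2 + (α ^ (k2+1) + α ^ (q-1-k2)) * (α ^ (k1+1)) + α ^ q = 0 := by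
        rw [← hv12]
        linear_combination hprod1 + h2F ((α ^ (k1+1)) ^ 2) + h2F (α ^ q)
      have hroots := aux_quad h2F (α ^ (k1+1)) (α ^ (k2+1)) (α ^ (q-1-k2)) _ _ rfl hprod2 hroot
      rcases hroots with h | h
      · have hu : αu ^ (k1+1) = αu ^ (k2+1) := Units.ext (by rw [hval, hval]; exact h)
        have hmod := pow_eq_pow_iff_modEq.mp hu
        rw [hordαu, Nat.ModEq, Nat.mod_eq_of_lt (by omega), Nat.mod_eq_of_lt (by omega)] at hmod
        omega
      · have hu : αu ^ (k1+1) = αu ^ (q-1-k2) := Units.ext (by rw [hval, hval]; exact h)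
        have hmod := pow_eq_pow_iff_modEq.mp hu
        rw [hordαu, Nat.ModEq] at hmod
        rcases Nat.eq_zero_or_pos k2 with rfl | hk2pos
        · rw [Nat.sub_zero, Nat.mod_self, Nat.mod_eq_of_lt (by omega)] at hmod; omega
        · rw [Nat.mod_eq_of_lt (by omega), Nat.mod_eq_of_lt (by omega)] at hmod; omega
    have hmem : ∀ a ∈ (Finset.range (q - 1)).filter (fun i0 => i0 ∈ Rset q α),
        ∃ k, k < q / 2 - 1 ∧ α ^ a = α ^ (k + 1) + α ^ (q - 1 - k) :=
      fun a ha => ((Finset.mem_filter.mp ha).2).2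
    have hbij : ((Finset.range (q - 1)).filter (fun i0 => i0 ∈ Rset q α)).card
        = (Finset.range (q / 2 - 1)).card := by
      refine Finset.card_bij (fun a ha => Classical.choose (hmem a ha)) ?_ ?_ ?_
      · intro a ha
        exact Finset.mem_range.mpr (Classical.choose_spec (hmem a ha)).1
      · intro a1 ha1 a2 ha2 h
        have s1 := Classical.choose_spec (hmem a1 ha1)
        have s2 := Classical.choose_spec (hmem a2 ha2)
        have hbeta : Classical.choose (hmem a1 ha1) = Classical.choose (hmem a2 ha2) := h
        refine hpowinj a1 a2
          (Finset.mem_range.mp (Finset.mem_filter.mp ha1).1)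
          (Finset.mem_range.mp (Finset.mem_filter.mp ha2).1) ?_
        rw [s1.2, s2.2, hbeta]
      · intro k hk
        rw [Finset.mem_range] at hk
        obtain ⟨a, ha1, ha2⟩ := hsurjα _ (hvne k hk)
        have haf : a ∈ (Finset.range (q - 1)).filter (fun i0 => i0 ∈ Rset q α) := by
          rw [Finset.mem_filter, Finset.mem_range]
          exact ⟨ha1, ha1, k, hk, ha2⟩
        refine ⟨a, haf, ?_⟩
        have s1 := Classical.choose_spec (hmem a haf)
        exact hvinj _ _ s1.1 hk (s1.2.symm.trans ha2)
    rw [hbij, Finset.card_range]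
  -- direction 1 : the split case gives an empty fiber
  have hdir1 : ∀ i0, i0 < q - 1 → ((i0 + j * (q - 2)) % (q - 1)) ∈ Rset q α → N i0 = 0 := by
    intro i0 hi0 hR
    obtain ⟨hi2, k0, hk0, heq⟩ := hR
    have hyprod : α ^ (j + (k0 + 1)) * α ^ (j + (q - 1 - k0)) = α ^ (2 * j + 1) := by
      rw [← pow_add]
      apply hpowmod
      rw [show j + (k0 + 1) + (j + (q - 1 - k0)) = 2 * j + 1 + (q - 1) by omega,
        Nat.add_mod_right]
    have hysum : α ^ (j + (k0 + 1)) + α ^ (j + (q - 1 - k0)) = α ^ i0 := by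
      have e1 : α ^ (j + (k0 + 1)) = α ^ j * α ^ (k0 + 1) := pow_add α j (k0+1)
      have e2 : α ^ (j + (q - 1 - k0)) = α ^ j * α ^ (q - 1 - k0) := pow_add α j (q-1-k0)
      rw [e1, e2, ← mul_add, ← heq, ← pow_add]
      apply hpowmod
      have h1 : (j + (i0 + j * (q - 2)) % (q - 1)) % (q - 1)
          = (j + (i0 + j * (q - 2))) % (q - 1) := Nat.add_mod_mod _ _ _
      have h2 : j + (i0 + j * (q - 2)) = i0 + j * (q - 1) := by
        rw [show q - 1 = (q - 2) + 1 by omega, Nat.mul_succ]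
        omega
      rw [h1, h2, Nat.add_mul_mod_self_right]
    rw [hNdef]
    rw [Finset.card_eq_zero, Finset.filter_eq_empty_iff]
    intro k _
    intro hk
    have hq1 := hquad k _ hk
    have hroots := aux_quad h2E (xk (k:ℕ)) (algebraMap F E (α ^ (j + (k0+1))))
      (algebraMap F E (α ^ (j + (q-1-k0))))
      (algebraMap F E (α ^ i0)) (algebraMap F E (α ^ (2*j+1)))
      (by rw [← map_add, hysum]) (by rw [← map_mul, hyprod]) hq1
    have hfixk : (xk (k:ℕ)) ^ q = xk (k:ℕ) := by
      rcases hroots with h | h <;> rw [h] <;> exact hfix _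
    have h0 : algebraMap F E (α ^ i0) = 0 := by
      have hh := hxE k
      rw [hk] at hh
      rw [hh, hfixk]
      exact h2E _
    exact pow_ne_zero i0 hα0 (halg (by rw [h0, map_zero]))
  -- pigeonhole
  set B : Finset ℕ :=
    (Finset.range (q - 1)).filter (fun i0 => ((i0 + j * (q - 2)) % (q - 1)) ∈ Rset q α) with hB
  set G : Finset ℕ :=
    (Finset.range (q - 1)).filter (fun i0 => ¬ ((i0 + j * (q - 2)) % (q - 1)) ∈ Rset q α) with hG
  have hBcard : B.card = q / 2 - 1 := by
    rw [← hRfin]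
    refine Finset.card_bij (fun a _ => (a + j * (q - 2)) % (q - 1)) ?_ ?_ ?_
    · intro a ha
      rw [hB, Finset.mem_filter] at ha
      rw [Finset.mem_filter]
      exact ⟨Finset.mem_range.mpr (Nat.mod_lt _ hm), ha.2⟩
    · intro a1 ha1 a2 ha2 h
      rw [hB, Finset.mem_filter, Finset.mem_range] at ha1 ha2
      exact aux_mod_inj ha1.1 ha2.1 h
    · intro r hr
      rw [Finset.mem_filter, Finset.mem_range] at hr
      refine ⟨(r + ((q - 1) - (j * (q - 2)) % (q - 1))) % (q - 1), ?_, ?_⟩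
      · rw [hB, Finset.mem_filter, Finset.mem_range]
        constructor
        · exact Nat.mod_lt _ hm
        · rw [aux_mod_shift _ hm hr.1]
          exact hr.2
      · exact aux_mod_shift _ hm hr.1
  have hGcard : G.card = q / 2 := by
    have h := Finset.card_filter_add_card_filter_not
      (s := Finset.range (q - 1)) (p := fun i0 => ((i0 + j * (q - 2)) % (q - 1)) ∈ Rset q α)
    rw [Finset.card_range] at h
    rw [← hB, ← hG] at h
    omega
  have hBsum : ∑ i0 ∈ B, N i0 = 0 := by
    apply Finset.sum_eq_zero
    intro i0 hi0
    rw [hB, Finset.mem_filter, Finset.mem_range] at hi0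
    exact hdir1 i0 hi0.1 hi0.2
  have hGsum : ∑ i0 ∈ G, N i0 = q := by
    have h := Finset.sum_filter_add_sum_filter_not (Finset.range (q - 1))
      (fun i0 => ((i0 + j * (q - 2)) % (q - 1)) ∈ Rset q α) N
    rw [← hB, ← hG] at h
    rw [hsum] at h
    omega
  have hG2 : ∀ i0 ∈ G, N i0 = 2 := by
    intro i0 hi0G
    by_contra hne
    have hlt : N i0 < 2 := by
      have := hfib2 (α ^ i0)
      rw [← hNdef i0] at this
      omega
    have hslt : ∑ i1 ∈ G, N i1 < ∑ i1 ∈ G, 2 := by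
      refine Finset.sum_lt_sum (fun i1 _ => ?_) ⟨i0, hi0G, hlt⟩
      have := hfib2 (α ^ i1)
      rw [← hNdef i1] at this
      exact this
    rw [Finset.sum_const, smul_eq_mul, hGcard, hGsum] at hslt
    omega
  -- conclusion
  rw [aux_rshift_iterate (q - 1) j (Wvec q α) i hi]
  have hq11 : q - 1 - 1 = q - 2 := by omega
  rw [hq11]
  set i' : ℕ := (i + j * (q - 2)) % (q - 1) with hi'
  have hi'lt : i' < q - 1 := Nat.mod_lt _ hm
  by_cases hcase : i' ∈ Rset q α
  · have h0 : N i = 0 := hdir1 i hi hcase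
    rw [hN] at h0
    simp only at h0
    rw [h0]
    have : i' ∉ Iset q α := fun h => h.2 hcase
    simp [Wvec, this]
  · have hiG : i ∈ G := by
      rw [hG, Finset.mem_filter, Finset.mem_range]
      exact ⟨hi, hcase⟩
    have h2' : N i = 2 := hG2 i hiG
    rw [hN] at h2'
    simp only at h2'
    rw [h2']
    have : i' ∈ Iset q α := ⟨hi'lt, hcase⟩
    simp [Wvec, this]
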